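/- Let P : ℝⁿ → ℝ and C₁,…,C_m : ℝⁿ → ℝ be differentiable, and define V(x,u) := P(x) − Σ_{j=1}^m C_j(x) u_j. Then the relaxation condition xᵀ ∂V/∂x(x,u) − uᵀ ∂V/∂u(x,u) ≥ 0 holds for all (x,u) ∈ ℝⁿ × ℝᵐ if and only if xᵀ ∇P(x) ≥ 0 for all x ∈ ℝⁿ and C_j(x) = xᵀ ∇C_j(x) for all x ∈ ℝⁿ and all j = 1,…,m. -/

import Mathlib

open Matrix

/-- The gradient (vector of partial derivatives) of `f : ℝⁿ → ℝ`. -/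
noncomputable def gradVec {n : ℕ} (f : (Fin n → ℝ) → ℝ) (x : Fin n → ℝ) : Fin n → ℝ :=
  fun i => fderiv ℝ f x (Pi.single i 1)

lemma gradVec_x_part {n m : ℕ} (P : (Fin n → ℝ) → ℝ) (C : Fin m → (Fin n → ℝ) → ℝ)
    (hP : Differentiable ℝ P) (hC : ∀ j, Differentiable ℝ (C j))
    (x : Fin n → ℝ) (u : Fin m → ℝ) (i : Fin n) :
    gradVec (fun x' => P x' - ∑ j, C j x' * u j) x i
      = gradVec P x i - ∑ j, gradVec (C j) x i * u j := by
  simp only [gradVec]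
  rw [fderiv_fun_sub (hP x) (by exact Differentiable.fun_sum (fun j _ => ((hC j).mul_const _)) x)]
  rw [fderiv_fun_sum (fun j _ => ((hC j).mul_const (u j)) x)]
  simp only [ContinuousLinearMap.sub_apply, ContinuousLinearMap.sum_apply]
  congr 1
  refine Finset.sum_congr rfl fun j _ => ?_
  rw [fderiv_mul_const ((hC j) x)]
  simp [mul_comm]

lemma gradVec_u_part {m : ℕ} (c : Fin m → ℝ) (u : Fin m → ℝ) (i : Fin m) (p : ℝ) :
    gradVec (fun u' => p - ∑ j, c j * u' j) u i = -(c i) := by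
  simp only [gradVec]
  have h : HasFDerivAt (fun u' : Fin m → ℝ => p - ∑ j, c j * u' j)
      (-(∑ j, c j • (ContinuousLinearMap.proj j : (Fin m → ℝ) →L[ℝ] ℝ))) u := by
    have : HasFDerivAt (fun u' : Fin m → ℝ => ∑ j, c j * u' j)
        (∑ j, c j • (ContinuousLinearMap.proj j : (Fin m → ℝ) →L[ℝ] ℝ)) u := by
      apply HasFDerivAt.fun_sum
      intro j _
      exact ((ContinuousLinearMap.proj j : (Fin m → ℝ) →L[ℝ] ℝ).hasFDerivAt).const_mul (c j)
    simpa using (hasFDerivAt_const p u).fun_sub this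
  rw [h.fderiv]
  simp [ContinuousLinearMap.proj, Pi.single_apply, Finset.sum_ite_eq']

lemma key_expr {n m : ℕ} (P : (Fin n → ℝ) → ℝ) (C : Fin m → (Fin n → ℝ) → ℝ)
    (hP : Differentiable ℝ P) (hC : ∀ j, Differentiable ℝ (C j))
    (x : Fin n → ℝ) (u : Fin m → ℝ) :
    x ⬝ᵥ gradVec (fun x' => P x' - ∑ j, C j x' * u j) x
      - u ⬝ᵥ gradVec (fun u' => P x - ∑ j, C j x * u' j) u
    = x ⬝ᵥ gradVec P x + ∑ j, u j * (C j x - x ⬝ᵥ gradVec (C j) x) := by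
  simp only [dotProduct]
  have h1 : ∀ i, gradVec (fun x' => P x' - ∑ j, C j x' * u j) x i
      = gradVec P x i - ∑ j, gradVec (C j) x i * u j :=
    gradVec_x_part P C hP hC x u
  have h2 : ∀ i, gradVec (fun u' => P x - ∑ j, C j x * u' j) u i = -(C i x) :=
    fun i => gradVec_u_part (fun j => C j x) u i (P x)
  simp only [h1, h2, mul_sub, mul_neg, sub_neg_eq_add, Finset.mul_sum, Finset.sum_sub_distrib,
    Finset.sum_add_distrib]
  rw [Finset.sum_comm]
  ring_nf
  rw [Finset.sum_neg_distrib]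
  have hs : ∀ j, ∑ i, x i * gradVec (C j) x i * u j = ∑ i, u j * x i * gradVec (C j) x i :=
    fun j => Finset.sum_congr rfl fun i _ => by ring
  simp only [hs]
  ring

/-- For the potential `V(x,u) = P(x) − Σⱼ Cⱼ(x)uⱼ`, the relaxation condition
`xᵀ ∂V/∂x − uᵀ ∂V/∂u ≥ 0` for all `(x,u)` holds iff `xᵀ∇P(x) ≥ 0` for all `x` and
`Cⱼ(x) = xᵀ∇Cⱼ(x)` for all `x` and `j`. -/
theorem relaxation_condition_for_affine_potential {n m : ℕ}
    (P : (Fin n → ℝ) → ℝ) (C : Fin m → (Fin n → ℝ) → ℝ)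
    (hP : Differentiable ℝ P) (hC : ∀ j, Differentiable ℝ (C j)) :
    (∀ (x : Fin n → ℝ) (u : Fin m → ℝ),
      0 ≤ x ⬝ᵥ gradVec (fun x' => P x' - ∑ j, C j x' * u j) x
            - u ⬝ᵥ gradVec (fun u' => P x - ∑ j, C j x * u' j) u) ↔
    ((∀ x : Fin n → ℝ, 0 ≤ x ⬝ᵥ gradVec P x) ∧
      (∀ (x : Fin n → ℝ) (j : Fin m), C j x = x ⬝ᵥ gradVec (C j) x)) := by
  simp only [key_expr P C hP hC]
  constructor
  · intro h
    constructor
    · intro x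
      have := h x 0
      simpa using this
    · intro x j
      set A := x ⬝ᵥ gradVec P x with hA
      set B := C j x - x ⬝ᵥ gradVec (C j) x with hB
      have hall : ∀ t : ℝ, 0 ≤ A + t * B := by
        intro t
        have := h x (Pi.single j t)
        rwa [Finset.sum_eq_single j (fun b _ hb => by simp [Pi.single_apply, hb])
          (by simp), Pi.single_eq_same] at this
      have hB0 : B = 0 := by
        by_contra hBne
        have := hall (-(A + 1) / B)
        rw [div_mul_cancel₀ _ hBne] at this
        linarith
      have := sub_eq_zero.mp hB0
      linarith [this]
  · rintro ⟨h1, h2⟩ x u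
    have : ∀ j, C j x - x ⬝ᵥ gradVec (C j) x = 0 := fun j => by rw [h2 x j]; ring
    simp [this]
    exact h1 x
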